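/- arXiv:2509.04924 — 3 statements merged into one kernel-verified Lean document; each statement's English description precedes it below -/
import Mathlib

section
/- Let c₂ > 0, c₃ > 0, U₀ > 4c₂/c₃, and let W : [0, T] → ℝ be continuous satisfying W(t) ≥ ∫₀ᵗ c₃/(1 + c₂ s)⁵ · W(s)² ds + U₀ for all t ∈ [0, T]. Then 1/U₀ ≥ c₃/(4c₂) − c₃/(4c₂(1 + c₂T)⁴); in particular T is bounded: T ≤ (1/c₂)·((1 − 4c₂/(c₃U₀))^{-1/4} − 1). -/
open MeasureTheory Set

theorem stmt_7 (c₂ c₃ U₀ T : ℝ) (hc₂ : 0 < c₂) (hc₃ : 0 < c₃)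
    (hU₀ : U₀ > 4 * c₂ / c₃) (hT : 0 ≤ T)
    (W : ℝ → ℝ) (hW : ContinuousOn W (Icc 0 T))
    (hineq : ∀ t ∈ Icc (0:ℝ) T,
      W t ≥ (∫ s in (0:ℝ)..t, c₃ / (1 + c₂ * s) ^ 5 * W s ^ 2) + U₀) :
    1 / U₀ ≥ c₃ / (4 * c₂) - c₃ / (4 * c₂ * (1 + c₂ * T) ^ 4) ∧
      T ≤ (1 / c₂) * ((1 - 4 * c₂ / (c₃ * U₀)) ^ (-(1/4 : ℝ)) - 1) := by
  have hU₀pos : 0 < U₀ := lt_trans (by positivity) hU₀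
  set g : ℝ → ℝ := fun s => c₃ / (1 + c₂ * s) ^ 5 * W s ^ 2 with hg_def
  set V : ℝ → ℝ := fun t => (∫ s in (0:ℝ)..t, g s) + U₀ with hV_def
  set F : ℝ → ℝ := fun t => c₃ / (4 * c₂) - c₃ / (4 * c₂ * (1 + c₂ * t) ^ 4) with hF_def
  have hden : ∀ t ∈ Icc (0:ℝ) T, (0:ℝ) < 1 + c₂ * t := by
    intro t ht
    nlinarith [ht.1]
  -- continuity of g on [0, T]
  have hgcont : ContinuousOn g (Icc 0 T) := by
    apply ContinuousOn.mul
    · exact continuousOn_const.div (by fun_prop)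
        (fun t ht => pow_ne_zero 5 (ne_of_gt (hden t ht)))
    · exact hW.pow 2
  have hgnonneg : ∀ s ∈ Icc (0:ℝ) T, 0 ≤ g s := by
    intro s hs
    have := hden s hs
    have : 0 ≤ c₃ / (1 + c₂ * s) ^ 5 := by positivity
    positivity
  -- lower bound on V
  have hVge : ∀ t ∈ Icc (0:ℝ) T, U₀ ≤ V t := by
    intro t ht
    have hint : 0 ≤ ∫ s in (0:ℝ)..t, g s := by
      apply intervalIntegral.integral_nonneg ht.1
      intro s hs
      exact hgnonneg s ⟨hs.1, le_trans hs.2 ht.2⟩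
    simp only [hV_def]
    linarith
  have hVpos : ∀ t ∈ Icc (0:ℝ) T, 0 < V t := fun t ht => lt_of_lt_of_le hU₀pos (hVge t ht)
  have hWV : ∀ t ∈ Icc (0:ℝ) T, V t ≤ W t := fun t ht => hineq t ht
  -- continuity of V on [0, T]
  have hVcont : ContinuousOn V (Icc 0 T) := by
    have h1 : IntegrableOn g (uIcc (0:ℝ) T) := by
      rw [uIcc_of_le hT]
      exact hgcont.integrableOn_Icc
    have := intervalIntegral.continuousOn_primitive_interval h1
    rw [uIcc_of_le hT] at this
    exact this.add continuousOn_const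
  -- continuity of F
  have hFcont : ContinuousOn F (Icc 0 T) := by
    apply ContinuousOn.sub continuousOn_const
    exact continuousOn_const.div (by fun_prop)
      (fun t ht => by
        have := hden t ht
        positivity)
  set h : ℝ → ℝ := fun t => (V t)⁻¹ + F t with hh_def
  have hhcont : ContinuousOn h (Icc 0 T) :=
    (hVcont.inv₀ (fun t ht => ne_of_gt (hVpos t ht))).add hFcont
  -- derivative of h at interior points
  have hderiv : ∀ t ∈ Ioo (0:ℝ) T, HasDerivAt h
      (-(g t) / (V t) ^ 2 + c₃ / (1 + c₂ * t) ^ 5) t := by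
    intro t ht
    have htIcc : t ∈ Icc (0:ℝ) T := ⟨ht.1.le, ht.2.le⟩
    -- derivative of the primitive
    have hgint : IntervalIntegrable g volume 0 t := by
      apply (hgcont.mono _).intervalIntegrable
      rw [uIcc_of_le ht.1.le]
      exact Icc_subset_Icc le_rfl ht.2.le
    have hmeas : StronglyMeasurableAtFilter g (nhds t) :=
      (hgcont.mono Ioo_subset_Icc_self).stronglyMeasurableAtFilter isOpen_Ioo t ht
    have hgct : ContinuousAt g t :=
      hgcont.continuousAt (Icc_mem_nhds ht.1 ht.2)
    have hprim : HasDerivAt (fun u => ∫ s in (0:ℝ)..u, g s) (g t) t :=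
      intervalIntegral.integral_hasDerivAt_right hgint hmeas hgct
    have hVd : HasDerivAt V (g t) t := hprim.add_const U₀
    have hVinv : HasDerivAt (fun u => (V u)⁻¹) (-(g t) / (V t) ^ 2) t :=
      hVd.inv (ne_of_gt (hVpos t htIcc))
    -- derivative of F
    have hd : (0:ℝ) < 1 + c₂ * t := hden t htIcc
    have hu : HasDerivAt (fun u : ℝ => 4 * c₂ * (1 + c₂ * u) ^ 4)
        (4 * c₂ * (4 * (1 + c₂ * t) ^ 3 * c₂)) t := by
      have h1 : HasDerivAt (fun u : ℝ => 1 + c₂ * u) c₂ t := by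
        simpa using ((hasDerivAt_id t).const_mul c₂).const_add (1:ℝ)
      have h2 := h1.pow 4
      simpa [mul_comm, mul_assoc, mul_left_comm] using h2.const_mul (4 * c₂)
    have hFd : HasDerivAt F (c₃ / (1 + c₂ * t) ^ 5) t := by
      have hune : 4 * c₂ * (1 + c₂ * t) ^ 4 ≠ 0 := by positivity
      have h3 := ((hasDerivAt_const t c₃).div hu hune).const_sub (c₃ / (4 * c₂))
      refine h3.congr_deriv ?_
      have hd' := hd.ne'
      field_simp
      ring
    exact hVinv.add hFd
  -- h is antitone
  have hanti : AntitoneOn h (Icc 0 T) := by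
    apply antitoneOn_of_deriv_nonpos (convex_Icc 0 T) hhcont
    · intro t ht
      rw [interior_Icc] at ht
      exact (hderiv t ht).differentiableAt.differentiableWithinAt
    · intro t ht
      rw [interior_Icc] at ht
      rw [(hderiv t ht).deriv]
      have htIcc : t ∈ Icc (0:ℝ) T := ⟨ht.1.le, ht.2.le⟩
      have hVt : 0 < V t := hVpos t htIcc
      have hWt : V t ≤ W t := hWV t htIcc
      have hd : (0:ℝ) < 1 + c₂ * t := hden t htIcc
      have hsq : (V t) ^ 2 ≤ (W t) ^ 2 := by nlinarith
      have key : -(g t) / (V t) ^ 2 + c₃ / (1 + c₂ * t) ^ 5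
          = (c₃ / (1 + c₂ * t) ^ 5) * ((V t) ^ 2 - (W t) ^ 2) / (V t) ^ 2 := by
        rw [hg_def]
        field_simp
        ring
      rw [key]
      apply div_nonpos_of_nonpos_of_nonneg
      · apply mul_nonpos_of_nonneg_of_nonpos
        · positivity
        · linarith
      · positivity
  -- evaluate at endpoints
  have hT0 : h T ≤ h 0 := hanti ⟨le_refl 0, hT⟩ ⟨hT, le_refl T⟩ hT
  have hV0 : V 0 = U₀ := by simp [hV_def]
  have hF0 : F 0 = 0 := by
    rw [hF_def]
    norm_num [Real.rpow_neg_one]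
  have hh0 : h 0 = 1 / U₀ := by
    rw [hh_def]
    simp [hV0, hF0, one_div]
  have hVTpos : 0 < V T := hVpos T ⟨hT, le_refl T⟩
  have hfirst : 1 / U₀ ≥ c₃ / (4 * c₂) - c₃ / (4 * c₂ * (1 + c₂ * T) ^ 4) := by
    have : h T = (V T)⁻¹ + F T := rfl
    have h1 : F T ≤ h T := by
      rw [this]
      have : 0 < (V T)⁻¹ := inv_pos.mpr hVTpos
      linarith
    rw [hF_def] at h1
    simp only at h1
    linarith [hh0 ▸ hT0]
  refine ⟨hfirst, ?_⟩
  -- algebra for the second part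
  set B : ℝ := 1 - 4 * c₂ / (c₃ * U₀) with hB_def
  have hBpos : 0 < B := by
    rw [hB_def]
    have : 4 * c₂ / (c₃ * U₀) < 1 := by
      rw [div_lt_one (by positivity)]
      calc 4 * c₂ = (4 * c₂ / c₃) * c₃ := by field_simp
        _ < U₀ * c₃ := by apply mul_lt_mul_of_pos_right hU₀ hc₃
        _ = c₃ * U₀ := by ring
    linarith
  have hP : (0:ℝ) < 1 + c₂ * T := hden T ⟨hT, le_refl T⟩
  have h4 : 0 < c₃ * U₀ - 4 * c₂ := by
    have := (div_lt_iff₀ hc₃).mp hU₀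
    nlinarith
  have hpow : (1 + c₂ * T) ^ 4 ≤ B⁻¹ := by
    have hP4pos : (0:ℝ) < (1 + c₂ * T) ^ 4 := pow_pos hP 4
    have hineq2 : c₃ / (4 * c₂) - 1 / U₀ ≤ c₃ / (4 * c₂ * (1 + c₂ * T) ^ 4) := by
      linarith
    rw [div_sub_div _ _ (by positivity) (ne_of_gt hU₀pos),
      div_le_div_iff₀ (by positivity) (by positivity)] at hineq2
    have hclear : (c₃ * U₀ - 4 * c₂) * (1 + c₂ * T) ^ 4 ≤ c₃ * U₀ := by
      nlinarith [hineq2]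
    have hBeq : B = (c₃ * U₀ - 4 * c₂) / (c₃ * U₀) := by
      rw [hB_def]; field_simp
    rw [hBeq, inv_div, le_div_iff₀ h4]
    nlinarith [hclear]
  have hrpow : (B ^ (-(1/4 : ℝ))) ^ (4:ℕ) = B⁻¹ := by
    rw [← Real.rpow_natCast (B ^ (-(1/4:ℝ))) 4, ← Real.rpow_mul hBpos.le]
    norm_num [Real.rpow_neg_one]
  have hP4 : 1 + c₂ * T ≤ B ^ (-(1/4 : ℝ)) := by
    apply le_of_pow_le_pow_left₀ (n := 4) (by norm_num) (Real.rpow_nonneg hBpos.le _)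
    rw [hrpow]
    exact hpow
  rw [one_div, inv_mul_eq_div, le_div_iff₀ hc₂]
  linarith
end

section
/- Let c₂, c₃, U₀ > 0 with U₀·c₃ > 4c₂, and let W : [0, ∞) → ℝ be continuous such that W(t) ≥ V(t) for all t, where V(t) := U₀ + ∫₀ᵗ c₃ (1 + c₂ s)^{-5} W(s)² ds. Then there is no such W defined on all of [0, ∞); i.e., the assumptions are contradictory for the full half-line. -/
open MeasureTheory Set

theorem stmt_15 (c₂ c₃ U₀ : ℝ) (hc₂ : 0 < c₂) (hc₃ : 0 < c₃) (hU₀ : 0 < U₀)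
    (hbig : U₀ * c₃ > 4 * c₂)
    (W : ℝ → ℝ) (hW : ContinuousOn W (Ici 0))
    (hineq : ∀ t ≥ (0:ℝ),
      W t ≥ U₀ + ∫ s in (0:ℝ)..t, c₃ * (1 + c₂ * s) ^ (-5 : ℤ) * W s ^ 2) :
    False := by
  -- extended integrand, continuous on all of ℝ
  set g : ℝ → ℝ := fun s => c₃ * (1 + c₂ * max s 0) ^ (-5 : ℤ) * W (max s 0) ^ 2 with hg
  have hbase : ∀ s : ℝ, (0:ℝ) < 1 + c₂ * max s 0 := fun s => by
    have : (0:ℝ) ≤ c₂ * max s 0 := mul_nonneg hc₂.le (le_max_right _ _)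
    linarith
  have hgc : Continuous g := by
    have hmax : Continuous fun s : ℝ => max s 0 := continuous_id.max continuous_const
    have hWc : Continuous fun s : ℝ => W (max s 0) :=
      hW.comp_continuous hmax fun x => mem_Ici.2 (le_max_right _ _)
    have hb : Continuous fun s : ℝ => (1 + c₂ * max s 0) ^ (-5 : ℤ) := by
      refine (continuous_const.add (continuous_const.mul hmax)).zpow₀ _ fun a => ?_
      exact Or.inl (hbase a).ne'
    exact (continuous_const.mul hb).mul (hWc.pow 2)
  have hgnn : ∀ s : ℝ, 0 ≤ g s := fun s => by
    have := zpow_pos (hbase s) (-5 : ℤ)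
    positivity
  set V : ℝ → ℝ := fun t => U₀ + ∫ s in (0:ℝ)..t, g s with hV
  have hgint : ∀ a b : ℝ, IntervalIntegrable g volume a b := fun a b =>
    hgc.intervalIntegrable a b
  have hVc : Continuous V :=
    continuous_const.add (intervalIntegral.continuous_primitive hgint 0)
  -- V has derivative g t everywhere
  have hVd : ∀ t : ℝ, HasDerivAt V (g t) t := fun t => by
    have := (intervalIntegral.integral_hasDerivAt_right (hgint 0 t)
      (hgc.stronglyMeasurableAtFilter _ _) hgc.continuousAt)
    simpa [hV] using (this.const_add U₀)
  have hVU : ∀ t ≥ (0:ℝ), U₀ ≤ V t := fun t ht => by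
    have : 0 ≤ ∫ s in (0:ℝ)..t, g s :=
      intervalIntegral.integral_nonneg ht fun u _ => hgnn u
    simp only [hV]; linarith
  have hVpos : ∀ t ≥ (0:ℝ), 0 < V t := fun t ht => lt_of_lt_of_le hU₀ (hVU t ht)
  -- W t ≥ V t for t ≥ 0
  have hWV : ∀ t ≥ (0:ℝ), V t ≤ W t := fun t ht => by
    have hEq : (∫ s in (0:ℝ)..t, c₃ * (1 + c₂ * s) ^ (-5 : ℤ) * W s ^ 2)
        = ∫ s in (0:ℝ)..t, g s := by
      refine intervalIntegral.integral_congr fun s hs => ?_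
      rw [uIcc_of_le ht] at hs
      simp [hg, max_eq_left hs.1]
    have := hineq t ht
    rw [hEq] at this
    simpa [hV] using this
  -- comparison function
  set H : ℝ → ℝ := fun t => U₀⁻¹ - c₃ / (4 * c₂) + c₃ / (4 * c₂) * (1 + c₂ * t) ^ (-4 : ℤ)
    with hH
  set F : ℝ → ℝ := fun t => (V t)⁻¹ - H t with hF
  have hHc : ContinuousOn H (Ici 0) := by
    have hb : ContinuousOn (fun t : ℝ => (1 + c₂ * t) ^ (-4 : ℤ)) (Ici 0) := by
      refine ((continuousOn_const.add (continuousOn_const.mul (continuousOn_id))).zpow₀ _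
        fun a ha => Or.inl ?_)
      have : (0:ℝ) ≤ c₂ * a := mul_nonneg hc₂.le ha
      intro h; simp only [Pi.add_apply, Pi.mul_apply, id_eq] at h; linarith
    exact continuousOn_const.add (continuousOn_const.mul hb)
  -- F is antitone on Ici 0
  have hanti : AntitoneOn F (Ici 0) := by
    refine antitoneOn_of_hasDerivWithinAt_nonpos (convex_Ici 0)
      (f' := fun t => -(g t) / (V t) ^ 2 + c₃ * (1 + c₂ * t) ^ (-5 : ℤ)) ?_ ?_ ?_
    · refine ContinuousOn.sub ?_ hHc
      exact ContinuousOn.inv₀ hVc.continuousOn fun t ht => (hVpos t ht).ne'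
    · intro t ht
      rw [interior_Ici] at ht
      have ht0 : (0:ℝ) ≤ t := le_of_lt ht
      have hVne : V t ≠ 0 := (hVpos t ht0).ne'
      have h1 : HasDerivAt (fun u => (V u)⁻¹) (-(g t) / (V t) ^ 2) t :=
        (hVd t).inv hVne
      have hb : (1 : ℝ) + c₂ * t ≠ 0 := by nlinarith
      have h2 : HasDerivAt (fun u : ℝ => (1 + c₂ * u)) c₂ t := by
        simpa using ((hasDerivAt_id t).const_mul c₂).const_add 1
      have h3 : HasDerivAt (fun u : ℝ => (1 + c₂ * u) ^ (-4 : ℤ))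
          (((-4 : ℤ) * (1 + c₂ * t) ^ (-5 : ℤ)) * c₂) t := by
        have := (hasDerivAt_zpow (-4) (1 + c₂ * t) (Or.inl hb)).comp t h2
        simpa [Function.comp_def] using this
      have hH' : HasDerivAt H (c₃ / (4 * c₂) * (((-4 : ℤ) * (1 + c₂ * t) ^ (-5 : ℤ)) * c₂)) t := by
        simpa [hH] using ((h3.const_mul (c₃ / (4 * c₂))).const_add (U₀⁻¹ - c₃ / (4 * c₂)))
      have key : c₃ / (4 * c₂) * (((-4 : ℤ) * (1 + c₂ * t) ^ (-5 : ℤ)) * c₂)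
          = -(c₃ * (1 + c₂ * t) ^ (-5 : ℤ)) := by
        field_simp
        ring
      rw [key] at hH'
      have hFd := h1.sub hH'
      simp only [sub_neg_eq_add] at hFd
      exact hFd.hasDerivWithinAt
    · intro t ht
      rw [interior_Ici] at ht
      have ht0 : (0:ℝ) ≤ t := le_of_lt ht
      have hVp := hVpos t ht0
      have hWt := hWV t ht0
      have hVU' := hVU t ht0
      have hz : (0:ℝ) < (1 + c₂ * t) ^ (-5 : ℤ) := by
        have h0 : (0:ℝ) < 1 + c₂ * t := by nlinarith
        exact zpow_pos h0 _
      have hgt : g t = c₃ * (1 + c₂ * t) ^ (-5 : ℤ) * W t ^ 2 := by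
        simp [hg, max_eq_left ht0]
      have hge : c₃ * (1 + c₂ * t) ^ (-5 : ℤ) * V t ^ 2 ≤ g t := by
        rw [hgt]
        have h1 : (0:ℝ) ≤ c₃ * (1 + c₂ * t) ^ (-5 : ℤ) := by positivity
        have hsq : V t ^ 2 ≤ W t ^ 2 := by nlinarith
        exact mul_le_mul_of_nonneg_left hsq h1
      have hV2 : (0:ℝ) < V t ^ 2 := by positivity
      have hle : c₃ * (1 + c₂ * t) ^ (-5 : ℤ) ≤ g t / V t ^ 2 :=
        (le_div_iff₀ hV2).2 hge
      have hfin : -(g t) / V t ^ 2 + c₃ * (1 + c₂ * t) ^ (-5 : ℤ) ≤ 0 := by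
        rw [neg_div]; linarith
      simpa using hfin
  -- F 0 = 0
  have hF0 : F 0 = 0 := by
    have hV0 : V 0 = U₀ := by simp [hV]
    simp [hF, hH, hV0]
  -- choose large time
  set δ : ℝ := c₃ / (4 * c₂) - U₀⁻¹ with hδ
  have hδpos : 0 < δ := by
    rw [hδ, sub_pos, inv_eq_one_div, div_lt_div_iff₀ hU₀ (by positivity)]
    nlinarith
  set M : ℝ := c₃ / (4 * c₂ * δ) with hM
  have hMpos : 0 < M := by positivity
  set t₀ : ℝ := max 0 ((M - 1) / c₂) with ht₀
  have ht₀0 : (0:ℝ) ≤ t₀ := le_max_left _ _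
  have hb1 : (1:ℝ) ≤ 1 + c₂ * t₀ := by nlinarith
  have hbM : M ≤ 1 + c₂ * t₀ := by
    have h1 : (M - 1) / c₂ ≤ t₀ := le_max_right _ _
    have := (div_le_iff₀ hc₂).1 h1
    linarith
  have hpow : M ≤ (1 + c₂ * t₀) ^ (4:ℕ) :=
    hbM.trans (le_self_pow₀ hb1 (by norm_num))
  have hzle : (1 + c₂ * t₀) ^ (-4 : ℤ) ≤ M⁻¹ := by
    rw [show ((1:ℝ) + c₂ * t₀) ^ (-4 : ℤ) = ((1 + c₂ * t₀) ^ (4:ℕ))⁻¹ by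
      rw [zpow_neg]; norm_cast]
    exact inv_anti₀ hMpos hpow
  have hHle : H t₀ ≤ 0 := by
    have h1 : c₃ / (4 * c₂) * (1 + c₂ * t₀) ^ (-4 : ℤ) ≤ c₃ / (4 * c₂) * M⁻¹ := by
      have : (0:ℝ) ≤ c₃ / (4 * c₂) := by positivity
      exact mul_le_mul_of_nonneg_left hzle this
    have h2 : c₃ / (4 * c₂) * M⁻¹ = δ := by
      rw [hM]
      field_simp
    simp only [hH]
    rw [hδ] at h2
    linarith [h1, h2.le]
  have hcontra := hanti (self_mem_Ici) (mem_Ici.2 ht₀0) ht₀0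
  rw [hF0] at hcontra
  -- F t₀ ≤ 0 means (V t₀)⁻¹ ≤ H t₀ ≤ 0, but (V t₀)⁻¹ > 0
  have hVinv : 0 < (V t₀)⁻¹ := inv_pos.2 (hVpos t₀ ht₀0)
  have hFt : (V t₀)⁻¹ - H t₀ ≤ 0 := hcontra
  have h1 : (V t₀)⁻¹ ≤ H t₀ := sub_nonpos.mp hFt
  exact absurd (h1.trans hHle) (not_le.mpr hVinv)
end

section
/- Let λ > 0, c₂ > 0, c₃ > 0, and suppose W : [0, T] → ℝ is C¹, W(0) = W₀, W'(t) ≥ c₃(1 + c₂ t)^{-5} W(t)² − h(t) for all t ∈ [0,T] where h : [0,T] → ℝ is continuous, nonnegative, and ∫₀ᵗ h(s) ds ≤ K for all t. If W₀ − K > 4c₂/c₃, then T < ∞ with the explicit bound T ≤ (1/c₂)((1 − 4c₂/(c₃(W₀ − K)))^{-1/4} − 1). -/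
open MeasureTheory Set

theorem stmt_19 (c₂ c₃ K W₀ T : ℝ) (hc₂ : 0 < c₂) (hc₃ : 0 < c₃) (hT : 0 ≤ T)
    (W h : ℝ → ℝ) (hW : ContDiff ℝ 1 W) (hW0 : W 0 = W₀)
    (hh : ContinuousOn h (Icc 0 T)) (hhpos : ∀ t ∈ Icc (0:ℝ) T, 0 ≤ h t)
    (hhK : ∀ t ∈ Icc (0:ℝ) T, (∫ s in (0:ℝ)..t, h s) ≤ K)
    (hineq : ∀ t ∈ Icc (0:ℝ) T,
      deriv W t ≥ c₃ / (1 + c₂ * t) ^ 5 * W t ^ 2 - h t)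
    (hbig : W₀ - K > 4 * c₂ / c₃) :
    T ≤ (1 / c₂) * ((1 - 4 * c₂ / (c₃ * (W₀ - K))) ^ (-(1/4 : ℝ)) - 1) := by
  have hWd : Differentiable ℝ W := hW.differentiable one_ne_zero
  set h' : ℝ → ℝ := fun s => h (min (max s 0) T) with hh'def
  have hmem : ∀ s : ℝ, min (max s 0) T ∈ Icc (0:ℝ) T := fun s =>
    ⟨le_min (le_max_right _ _) hT, min_le_right _ _⟩
  have hch' : Continuous h' :=
    hh.comp_continuous (by continuity) hmem
  have hh'eq : ∀ s ∈ Icc (0:ℝ) T, h' s = h s := by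
    intro s hs
    simp only [hh'def]
    rw [max_eq_left hs.1, min_eq_left hs.2]
  set H : ℝ → ℝ := fun t => ∫ s in (0:ℝ)..t, h' s with hHdef
  have hHd : ∀ t : ℝ, HasDerivAt H (h' t) t := fun t =>
    (hch'.integral_hasStrictDerivAt 0 t).hasDerivAt
  have hHIcc : ∀ t ∈ Icc (0:ℝ) T, H t ≤ K := by
    intro t ht
    have heq : H t = ∫ s in (0:ℝ)..t, h s := by
      apply intervalIntegral.integral_congr
      intro s hs
      rw [uIcc_of_le ht.1] at hs
      exact hh'eq s ⟨hs.1, hs.2.trans ht.2⟩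
    rw [heq]; exact hhK t ht
  set V : ℝ → ℝ := fun t => W t + H t with hVdef
  have hVd : ∀ t : ℝ, HasDerivAt V (deriv W t + h' t) t := fun t =>
    ((hWd t).hasDerivAt).add (hHd t)
  have hposbase : ∀ t : ℝ, 0 ≤ t → (0:ℝ) < 1 + c₂ * t := fun t ht => by nlinarith
  have hVmono : MonotoneOn V (Icc 0 T) := by
    apply monotoneOn_of_deriv_nonneg (convex_Icc _ _)
    · exact fun x _ => ((hVd x).continuousAt).continuousWithinAt
    · intro x _
      exact (hVd x).differentiableAt.differentiableWithinAt
    · intro x hx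
      rw [interior_Icc] at hx
      have hxI : x ∈ Icc (0:ℝ) T := ⟨hx.1.le, hx.2.le⟩
      rw [(hVd x).deriv]
      have h1 := hineq x hxI
      have h2 : (0:ℝ) ≤ c₃ / (1 + c₂ * x) ^ 5 * W x ^ 2 :=
        mul_nonneg (div_nonneg hc₃.le (pow_nonneg (hposbase x hx.1.le).le 5)) (sq_nonneg _)
      rw [hh'eq x hxI]
      linarith
  have hU₀pos : 0 < W₀ - K := lt_trans (by positivity) hbig
  have hV0 : V 0 = W₀ := by
    simp only [hVdef, hHdef, intervalIntegral.integral_same, add_zero, hW0]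
  have hVK : ∀ t ∈ Icc (0:ℝ) T, W₀ - K ≤ V t - K := by
    intro t ht
    have := hVmono ⟨le_refl (0:ℝ), hT⟩ ht ht.1
    rw [hV0] at this
    linarith
  have hWge : ∀ t ∈ Icc (0:ℝ) T, V t - K ≤ W t := by
    intro t ht
    have := hHIcc t ht
    simp only [hVdef]
    linarith
  set Φ : ℝ → ℝ := fun t => -(c₃ / (4 * c₂)) * ((1 + c₂ * t) ^ 4)⁻¹ with hΦdef
  have hΦd : ∀ t : ℝ, 0 ≤ t → HasDerivAt Φ (c₃ / (1 + c₂ * t) ^ 5) t := by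
    intro t ht
    have hb := hposbase t ht
    have h1 : HasDerivAt (fun s : ℝ => 1 + c₂ * s) c₂ t := by
      have := ((hasDerivAt_id' t).const_mul c₂).const_add 1
      rwa [mul_one] at this
    have h2 : HasDerivAt (fun s : ℝ => (1 + c₂ * s) ^ 4)
        ((4:ℕ) * (1 + c₂ * t) ^ 3 * c₂) t := by
      simpa using h1.fun_pow 4
    have h3 : HasDerivAt (fun s : ℝ => ((1 + c₂ * s) ^ 4)⁻¹)
        (-((4:ℕ) * (1 + c₂ * t) ^ 3 * c₂) / ((1 + c₂ * t) ^ 4) ^ 2) t :=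
      h2.inv (by positivity)
    have h4 := h3.const_mul (-(c₃ / (4 * c₂)))
    refine h4.congr_deriv ?_
    push_cast
    field_simp
  set G : ℝ → ℝ := fun t => (V t - K)⁻¹ + Φ t with hGdef
  have hGd : ∀ t ∈ Icc (0:ℝ) T,
      HasDerivAt G (-(deriv W t + h' t) / (V t - K) ^ 2 + c₃ / (1 + c₂ * t) ^ 5) t := by
    intro t ht
    have hne : V t - K ≠ 0 := by
      have := hVK t ht; intro hc; rw [hc] at this; linarith
    exact (((hVd t).sub_const K).inv hne).add (hΦd t ht.1)
  have hGanti : AntitoneOn G (Icc 0 T) := by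
    apply antitoneOn_of_deriv_nonpos (convex_Icc _ _)
    · exact fun x hx => ((hGd x hx).continuousAt).continuousWithinAt
    · intro x hx
      rw [interior_Icc] at hx
      exact (hGd x ⟨hx.1.le, hx.2.le⟩).differentiableAt.differentiableWithinAt
    · intro x hx
      rw [interior_Icc] at hx
      have hxI : x ∈ Icc (0:ℝ) T := ⟨hx.1.le, hx.2.le⟩
      rw [(hGd x hxI).deriv]
      have hb := hposbase x hx.1.le
      have hQ : 0 < V x - K := lt_of_lt_of_le hU₀pos (hVK x hxI)
      have hWx : V x - K ≤ W x := hWge x hxI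
      have h1 := hineq x hxI
      have hsq : (V x - K) ^ 2 ≤ W x ^ 2 := pow_le_pow_left₀ hQ.le hWx 2
      have hcnn : (0:ℝ) ≤ c₃ / (1 + c₂ * x) ^ 5 :=
        div_nonneg hc₃.le (pow_nonneg hb.le 5)
      have key : c₃ / (1 + c₂ * x) ^ 5 * (V x - K) ^ 2 ≤ deriv W x + h' x := by
        rw [hh'eq x hxI]
        have := mul_le_mul_of_nonneg_left hsq hcnn
        linarith
      have hQ2 : 0 < (V x - K) ^ 2 := by positivity
      have h5 : c₃ / (1 + c₂ * x) ^ 5 ≤ (deriv W x + h' x) / (V x - K) ^ 2 :=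
        (le_div_iff₀ hQ2).2 key
      have hnd : -(deriv W x + h' x) / (V x - K) ^ 2
          = -((deriv W x + h' x) / (V x - K) ^ 2) := by ring
      rw [hnd]
      linarith
  have hGTG0 : G T ≤ G 0 := hGanti ⟨le_refl (0:ℝ), hT⟩ ⟨hT, le_refl T⟩ hT
  have hG0 : G 0 = (W₀ - K)⁻¹ - c₃ / (4 * c₂) := by
    simp only [hGdef, hΦdef, hV0]
    norm_num
    ring
  have hVTpos : 0 < V T - K := lt_of_lt_of_le hU₀pos (hVK T ⟨hT, le_refl T⟩)
  have hinvpos : 0 < (V T - K)⁻¹ := inv_pos.2 hVTpos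
  set a : ℝ := 1 - 4 * c₂ / (c₃ * (W₀ - K)) with hadef
  set P : ℝ := (1 + c₂ * T) ^ 4 with hPdef
  have hbT : (0:ℝ) < 1 + c₂ * T := hposbase T hT
  have hP : 0 < P := by positivity
  have haux : -(c₃ / (4 * c₂)) * P⁻¹ < (W₀ - K)⁻¹ - c₃ / (4 * c₂) := by
    have : G T = (V T - K)⁻¹ + -(c₃ / (4 * c₂)) * P⁻¹ := rfl
    rw [this, hG0] at hGTG0
    linarith
  have key2 : a < P⁻¹ := by
    have e1 : c₃ / (4 * c₂) - c₃ / (4 * c₂) * P⁻¹ < (W₀ - K)⁻¹ := by linarith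
    have hpos4 : (0:ℝ) < 4 * c₂ / c₃ := by positivity
    have e2 := mul_lt_mul_of_pos_left e1 hpos4
    have eL : 4 * c₂ / c₃ * (c₃ / (4 * c₂) - c₃ / (4 * c₂) * P⁻¹) = 1 - P⁻¹ := by
      field_simp
    have eR : 4 * c₂ / c₃ * (W₀ - K)⁻¹ = 4 * c₂ / (c₃ * (W₀ - K)) := by
      field_simp
    rw [eL, eR] at e2
    simp only [hadef]
    linarith
  have haT : 0 < a := by
    have h4 : 4 * c₂ < c₃ * (W₀ - K) := by
      have := (div_lt_iff₀ hc₃).1 hbig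
      nlinarith
    have : 4 * c₂ / (c₃ * (W₀ - K)) < 1 := by
      rw [div_lt_one (by positivity)]
      exact h4
    simp only [hadef]
    linarith
  have hPa : P < a⁻¹ := by
    have h1 : a * P < 1 := by
      have := mul_lt_mul_of_pos_right key2 hP
      rwa [inv_mul_cancel₀ (ne_of_gt hP)] at this
    have h2 : a * P < a * a⁻¹ := by
      rwa [mul_inv_cancel₀ (ne_of_gt haT)]
    exact lt_of_mul_lt_mul_left h2 haT.le
  have hrpow : (P : ℝ) ^ (1/4 : ℝ) ≤ (a⁻¹) ^ (1/4 : ℝ) :=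
    Real.rpow_le_rpow hP.le hPa.le (by norm_num)
  have hL : (P : ℝ) ^ (1/4 : ℝ) = 1 + c₂ * T := by
    rw [hPdef, ← Real.rpow_natCast (1 + c₂ * T) 4, ← Real.rpow_mul hbT.le]
    norm_num
  have hR : (a⁻¹) ^ (1/4 : ℝ) = a ^ (-(1/4 : ℝ)) := by
    rw [Real.inv_rpow haT.le, ← Real.rpow_neg haT.le]
  rw [hL, hR] at hrpow
  have hfin : T ≤ (a ^ (-(1/4 : ℝ)) - 1) / c₂ := by
    rw [le_div_iff₀ hc₂]
    linarith
  calc T ≤ (a ^ (-(1/4 : ℝ)) - 1) / c₂ := hfin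
    _ = (1 / c₂) * (a ^ (-(1/4 : ℝ)) - 1) := by ring
end
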